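/- arXiv:1106.3954 — 2 statements merged into one kernel-verified Lean document; each statement's English description precedes it below -/
import Mathlib

section
/- (Lemma 1.) Fix an integer p ≥ 1 (with an associated Gaussian field g for p), t ∈ ℝ, and let π be a measurable reordering for (p,t). Suppose that for every k ≥ 1 the joint law of ((w^t_{π(l)})_{l<k}, (g_{π(l)} − b_p t)_{l<k}, (Q_{π(l),π(l')})_{l,l'<k}) equals the joint law of ((w_l)_{l<k}, (g_l)_{l<k}, (Q_{l,l'})_{l,l'<k}). Then for every k ≥ 1, all integers n₁,…,n_k ≥ 0 and every bounded measurable f : (Fin k → Fin k → ℝ) → ℝ, E[Σ_{j : Fin k → ℕ} (Π_i w^t_{j i}) (Π_i (g_{j i} − b_p t)^{n_i}) f((Q_{j i, j i'}))] = E[Σ_{j : Fin k → ℕ} (Π_i w_{j i}) (Π_i (g_{j i})^{n_i}) f((Q_{j i, j i'}))]. -/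
open MeasureTheory ProbabilityTheory Real

noncomputable section

/-- The Hilbert space ℓ²(ℕ, ℝ). -/
abbrev ℓ2 : Type := lp (fun _ : ℕ => ℝ) 2

instance : MeasurableSpace ℓ2 := borel ℓ2
instance : BorelSpace ℓ2 := ⟨rfl⟩

/-- The Gram matrix (overlaps) of the atoms `ξ`. -/
def overlap {Ω₁ : Type*} (ξ : Ω₁ → ℕ → ℓ2) (ω₁ : Ω₁) (l l' : ℕ) : ℝ :=
  inner (𝕜 := ℝ) (ξ ω₁ l) (ξ ω₁ l')

/-- The Gibbs average of a bounded measurable function of the overlap array of `n` replicas,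
with weights `W` and overlap matrix `Q`. -/
def gibbs (W : ℕ → ℝ) (Q : ℕ → ℕ → ℝ) (n : ℕ) (f : (Fin n → Fin n → ℝ) → ℝ) : ℝ :=
  ∑' j : Fin n → ℕ, (∏ i, W (j i)) * f (fun i i' => Q (j i) (j i'))

/-- `f` is a bounded function. -/
def Bdd {α : Type*} (f : α → ℝ) : Prop := ∃ C, ∀ x, |f x| ≤ C

/-- The data `(w, ξ)` models a random discrete measure `G = ∑ w_l δ_{ξ_l}` on the unit ball
of ℓ², with nonincreasing nonnegative weights summing to one. -/
def IsRandomMeasure {Ω₁ : Type*} [MeasurableSpace Ω₁] (P₁ : Measure Ω₁)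
    (w : Ω₁ → ℕ → ℝ) (ξ : Ω₁ → ℕ → ℓ2) : Prop :=
  (∀ l, Measurable fun ω₁ => w ω₁ l) ∧ (∀ l, Measurable fun ω₁ => ξ ω₁ l) ∧
    ∀ᵐ ω₁ ∂P₁, (∀ l, 0 ≤ w ω₁ l) ∧ Antitone (w ω₁) ∧ HasSum (w ω₁) 1 ∧ ∀ l, ‖ξ ω₁ l‖ ≤ 1

/-- `g` is, conditionally on `ω₁`, a centered Gaussian field on the atoms with covariance
`Cov(g_l, g_{l'}) = Q_{l,l'}^p`; characterized by the moment generating function. -/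
def IsGaussianField {Ω₁ Ω₂ : Type*} [MeasurableSpace Ω₁] [MeasurableSpace Ω₂]
    (P₁ : Measure Ω₁) (P₂ : Measure Ω₂) (ξ : Ω₁ → ℕ → ℓ2) (p : ℕ)
    (g : Ω₁ × Ω₂ → ℕ → ℝ) : Prop :=
  (∀ l, Measurable fun ω => g ω l) ∧
    ∀ᵐ ω₁ ∂P₁, ∀ k : ℕ, 1 ≤ k → ∀ l : Fin k → ℕ, ∀ s : Fin k → ℝ,
      ∫ ω₂, Real.exp (∑ i, s i * g (ω₁, ω₂) (l i)) ∂P₂ =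
        Real.exp ((1 / 2) * ∑ i, ∑ i', s i * s i' * (overlap ξ ω₁ (l i) (l i')) ^ p)

/-- The tilted weights `w^t_l = w_l e^{t g_l} / ∑_m w_m e^{t g_m}`. -/
def tilt {Ω₁ Ω₂ : Type*} (w : Ω₁ → ℕ → ℝ) (g : Ω₁ × Ω₂ → ℕ → ℝ) (t : ℝ)
    (ω : Ω₁ × Ω₂) (l : ℕ) : ℝ :=
  w ω.1 l * Real.exp (t * g ω l) / ∑' m, w ω.1 m * Real.exp (t * g ω m)

/-- `E⟨f⟩`: expected Gibbs average of `f` over `n` replicas. -/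
def EGibbs {Ω₁ : Type*} [MeasurableSpace Ω₁] (P₁ : Measure Ω₁)
    (w : Ω₁ → ℕ → ℝ) (ξ : Ω₁ → ℕ → ℓ2) (n : ℕ) (f : (Fin n → Fin n → ℝ) → ℝ) : ℝ :=
  ∫ ω₁, gibbs (w ω₁) (overlap ξ ω₁) n f ∂P₁

/-- `b_p = (q*)^p - E⟨R_{1,2}^p⟩`. -/
def bCoef {Ω₁ : Type*} [MeasurableSpace Ω₁] (P₁ : Measure Ω₁)
    (w : Ω₁ → ℕ → ℝ) (ξ : Ω₁ → ℕ → ℓ2) (qs : ℝ) (p : ℕ) : ℝ :=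
  qs ^ p - EGibbs P₁ w ξ 2 (fun R => (R 0 1) ^ p)

/-- `G` is concentrated on the sphere of radius `√q*`. -/
def ConcOnSphere {Ω₁ : Type*} [MeasurableSpace Ω₁] (P₁ : Measure Ω₁)
    (w : Ω₁ → ℕ → ℝ) (ξ : Ω₁ → ℕ → ℓ2) (qs : ℝ) : Prop :=
  ∀ᵐ ω₁ ∂P₁, ∀ l, 0 < w ω₁ l → overlap ξ ω₁ l l = qs

/-- The Ghirlanda–Guerra identities: for every `n ≥ 2` (here `n+2`), every `p ≥ 1` and every
bounded measurable `f` of the overlaps of `n` replicas,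
`n E⟨f R_{1,n+1}^p⟩ = E⟨f⟩ E⟨R_{1,2}^p⟩ + ∑_{m=2}^n E⟨f R_{1,m}^p⟩`. -/
def GGIdentities {Ω₁ : Type*} [MeasurableSpace Ω₁] (P₁ : Measure Ω₁)
    (w : Ω₁ → ℕ → ℝ) (ξ : Ω₁ → ℕ → ℓ2) : Prop :=
  ∀ n : ℕ, ∀ p : ℕ, 1 ≤ p → ∀ f : (Fin (n + 2) → Fin (n + 2) → ℝ) → ℝ,
    Measurable f → Bdd f →
    ((n + 2 : ℕ) : ℝ) * EGibbs P₁ w ξ (n + 3)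
        (fun R => f (fun a b => R a.castSucc b.castSucc) * (R 0 (Fin.last (n + 2))) ^ p)
      = EGibbs P₁ w ξ (n + 2) f * EGibbs P₁ w ξ 2 (fun R => (R 0 1) ^ p)
        + ∑ m : Fin (n + 2), if m = 0 then 0
            else EGibbs P₁ w ξ (n + 2) (fun R => f R * (R 0 m) ^ p)

/-- The Aizenman–Contucci stochastic stability in average form, for the family of Gaussian
fields `g p`: `E⟨f⟩_t = E⟨f⟩`. -/
def ACStability {Ω₁ Ω₂ : Type*} [MeasurableSpace Ω₁] [MeasurableSpace Ω₂]
    (P₁ : Measure Ω₁) (P₂ : Measure Ω₂) (w : Ω₁ → ℕ → ℝ) (ξ : Ω₁ → ℕ → ℓ2)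
    (g : ℕ → Ω₁ × Ω₂ → ℕ → ℝ) : Prop :=
  ∀ p : ℕ, 1 ≤ p → ∀ t : ℝ, ∀ n : ℕ, 1 ≤ n → ∀ f : (Fin n → Fin n → ℝ) → ℝ,
    Measurable f → Bdd f →
    ∫ ω, gibbs (tilt w (g p) t ω) (overlap ξ ω.1) n f ∂(P₁.prod P₂) = EGibbs P₁ w ξ n f

/-- The unified average identities for `(p, t)` with shift constant `b`: equality of all joint
moments of the (shifted) Gaussian values and bounded measurable functions of the overlaps,
under the tilted and the original Gibbs averages. -/
def UnifiedAvg {Ω₁ Ω₂ : Type*} [MeasurableSpace Ω₁] [MeasurableSpace Ω₂]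
    (P₁ : Measure Ω₁) (P₂ : Measure Ω₂) (w : Ω₁ → ℕ → ℝ) (ξ : Ω₁ → ℕ → ℓ2)
    (g : Ω₁ × Ω₂ → ℕ → ℝ) (t b : ℝ) : Prop :=
  ∀ k : ℕ, 1 ≤ k → ∀ nn : Fin k → ℕ, ∀ f : (Fin k → Fin k → ℝ) → ℝ,
    Measurable f → Bdd f →
    ∫ ω, ∑' j : Fin k → ℕ, (∏ i, tilt w g t ω (j i)) *
        (∏ i, (g ω (j i) - b * t) ^ nn i) *
        f (fun i i' => overlap ξ ω.1 (j i) (j i')) ∂(P₁.prod P₂)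
      = ∫ ω, ∑' j : Fin k → ℕ, (∏ i, w ω.1 (j i)) *
          (∏ i, (g ω (j i)) ^ nn i) *
          f (fun i i' => overlap ξ ω.1 (j i) (j i')) ∂(P₁.prod P₂)

/-- A measurable reordering for `(p, t)`: a random permutation of ℕ, measurable in `ω`,
such that almost surely `l ↦ w^t_{prm(l)}` is nonincreasing. -/
def IsReordering {Ω₁ Ω₂ : Type*} [MeasurableSpace Ω₁] [MeasurableSpace Ω₂]
    (P₁ : Measure Ω₁) (P₂ : Measure Ω₂) (w : Ω₁ → ℕ → ℝ)
    (g : Ω₁ × Ω₂ → ℕ → ℝ) (t : ℝ) (prm : Ω₁ × Ω₂ → Equiv.Perm ℕ) : Prop :=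
  (∀ l, Measurable fun ω => prm ω l) ∧
    ∀ᵐ ω ∂(P₁.prod P₂), Antitone fun l => tilt w g t ω (prm ω l)


open scoped ENNReal NNReal in
lemma measurable_tsum_real {α ι : Type*} [MeasurableSpace α] [Countable ι] {f : ι → α → ℝ}
    (hf : ∀ i, Measurable (f i)) : Measurable fun x => ∑' i, f i x := by
  classical
  set S : Set α := {x | Summable fun i => f i x} with hSdef
  have hSm : MeasurableSet S := by
    have h1 : S = (fun x => ∑' i, (‖f i x‖₊ : ℝ≥0∞)) ⁻¹' {⊤}ᶜ := by
      ext x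
      simp only [hSdef, Set.mem_setOf_eq, Set.mem_preimage, Set.mem_compl_iff,
        Set.mem_singleton_iff]
      rw [← ne_eq, ENNReal.tsum_coe_ne_top_iff_summable]
      rw [← NNReal.summable_coe]
      simp only [coe_nnnorm, Real.norm_eq_abs]
      exact summable_abs_iff.symm
    rw [h1]
    exact (Measurable.ennreal_tsum fun i => (hf i).nnnorm.coe_nnreal_ennreal)
      ((measurableSet_singleton ⊤).compl)
  have hgm : Measurable fun x => (∑' i, (((f i x).toNNReal : ℝ≥0∞))).toReal
      - (∑' i, (((-(f i x)).toNNReal : ℝ≥0∞))).toReal := by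
    refine Measurable.sub ?_ ?_
    · exact (Measurable.ennreal_tsum fun i =>
        ((hf i).real_toNNReal).coe_nnreal_ennreal).ennreal_toReal
    · exact (Measurable.ennreal_tsum fun i =>
        (((hf i).neg).real_toNNReal).coe_nnreal_ennreal).ennreal_toReal
  have heq : (fun x => ∑' i, f i x) = S.indicator (fun x =>
      (∑' i, (((f i x).toNNReal : ℝ≥0∞))).toReal
      - (∑' i, (((-(f i x)).toNNReal : ℝ≥0∞))).toReal) := by
    funext x
    by_cases hx : x ∈ S
    · rw [Set.indicator_of_mem hx]
      have hsum : Summable fun i => f i x := hx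
      have habs : Summable fun i => |f i x| := hsum.abs
      have hp : Summable fun i => ((f i x).toNNReal : ℝ) := by
        refine Summable.of_nonneg_of_le (fun i => NNReal.coe_nonneg _) (fun i => ?_) habs
        rw [Real.coe_toNNReal']
        exact max_le (le_abs_self _) (abs_nonneg _)
      have hq : Summable fun i => (((-(f i x)).toNNReal : ℝ)) := by
        refine Summable.of_nonneg_of_le (fun i => NNReal.coe_nonneg _) (fun i => ?_) habs
        rw [Real.coe_toNNReal']
        refine max_le ?_ (abs_nonneg _)
        rw [← abs_neg]
        exact le_abs_self _
      have hpN : Summable fun i => (f i x).toNNReal := NNReal.summable_coe.mp hp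
      have hqN : Summable fun i => (-(f i x)).toNNReal := NNReal.summable_coe.mp hq
      have e1 : (∑' i, (((f i x).toNNReal : ℝ≥0∞))).toReal = ∑' i, ((f i x).toNNReal : ℝ) := by
        rw [← ENNReal.coe_tsum hpN, ENNReal.coe_toReal, NNReal.coe_tsum]
      have e2 : (∑' i, (((-(f i x)).toNNReal : ℝ≥0∞))).toReal
          = ∑' i, (((-(f i x)).toNNReal : ℝ)) := by
        rw [← ENNReal.coe_tsum hqN, ENNReal.coe_toReal, NNReal.coe_tsum]
      rw [e1, e2, ← hp.tsum_sub hq]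
      refine tsum_congr fun i => ?_
      rw [Real.coe_toNNReal', Real.coe_toNNReal']
      rcases le_total 0 (f i x) with h | h
      · rw [max_eq_left h, max_eq_right (neg_nonpos.mpr h), sub_zero]
      · rw [max_eq_right h, max_eq_left (neg_nonneg.mpr h), zero_sub, neg_neg]
    · rw [Set.indicator_of_notMem hx, tsum_eq_zero_of_not_summable hx]
  rw [heq]
  exact hgm.indicator hSm

lemma measurable_comp_countable {Ω β γ : Type*} [MeasurableSpace Ω] [MeasurableSpace γ]
    [Countable β] [MeasurableSpace β] [MeasurableSingletonClass β]
    {F : Ω → β → γ} (hF : ∀ m, Measurable fun ω => F ω m) {φ : Ω → β} (hφ : Measurable φ) :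
    Measurable fun ω => F ω (φ ω) := by
  have h : Measurable fun p : Ω × β => F p.1 p.2 :=
    measurable_from_prod_countable_left (f := fun p : Ω × β => F p.1 p.2) fun m => hF m
  exact h.comp (measurable_id.prodMk hφ)

lemma measurable_lp2_apply (n : ℕ) : Measurable fun x : ℓ2 => x n := by
  have hc : Continuous fun x : ℓ2 => x n := by
    refine (LipschitzWith.of_dist_le_mul (K := 1) fun x y => ?_).continuous
    rw [NNReal.coe_one, one_mul, Real.dist_eq, dist_eq_norm]
    have h : x n - y n = (x - y) n := by simp [lp.coeFn_sub]
    rw [h, ← Real.norm_eq_abs]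
    exact lp.norm_apply_le_norm (by norm_num) (x - y) n
  exact hc.measurable

lemma measurable_overlap {Ω₁ : Type*} [MeasurableSpace Ω₁] {ξ : Ω₁ → ℕ → ℓ2}
    (hξ : ∀ l, Measurable fun ω₁ => ξ ω₁ l) (l l' : ℕ) :
    Measurable fun ω₁ => overlap ξ ω₁ l l' := by
  have h : ∀ ω₁, overlap ξ ω₁ l l' = ∑' n, ξ ω₁ l n * ξ ω₁ l' n := by
    intro ω₁; rw [overlap, lp.inner_eq_tsum]; simp [RCLike.inner_apply, mul_comm]
  simp only [h]
  exact measurable_tsum_real fun n =>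
    ((measurable_lp2_apply n).comp (hξ l)).mul ((measurable_lp2_apply n).comp (hξ l'))


/-- **Lemma 1.** Fix `p ≥ 1` with associated Gaussian field `g`, `t ∈ ℝ` and a
measurable reordering `prm` for `(p, t)`. If for every `k ≥ 1` the joint law of the reordered
tilted weights, shifted Gaussian values and overlaps coincides with the joint law of the
original weights, Gaussian values and overlaps, then the unified average identities hold
for `(p, t)`. -/
theorem law_equality_implies_unified
    {Ω₁ Ω₂ : Type*} [MeasurableSpace Ω₁] [MeasurableSpace Ω₂]
    (P₁ : Measure Ω₁) (P₂ : Measure Ω₂)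
    [IsProbabilityMeasure P₁] [IsProbabilityMeasure P₂]
    (w : Ω₁ → ℕ → ℝ) (ξ : Ω₁ → ℕ → ℓ2)
    (qs : ℝ) (hqs : qs ∈ Set.Icc (0 : ℝ) 1)
    (hRM : IsRandomMeasure P₁ w ξ)
    (p : ℕ) (hp : 1 ≤ p) (g : Ω₁ × Ω₂ → ℕ → ℝ)
    (hg : IsGaussianField P₁ P₂ ξ p g)
    (t : ℝ) (prm : Ω₁ × Ω₂ → Equiv.Perm ℕ)
    (hprm : IsReordering P₁ P₂ w g t prm)
    (hLaw : ∀ k : ℕ, 1 ≤ k →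
      Measure.map (fun ω =>
          ((fun l : Fin k => tilt w g t ω (prm ω l)),
           (fun l : Fin k => g ω (prm ω l) - bCoef P₁ w ξ qs p * t),
           (fun l l' : Fin k => overlap ξ ω.1 (prm ω l) (prm ω l')))) (P₁.prod P₂)
        = Measure.map (fun ω =>
            ((fun l : Fin k => w ω.1 l),
             (fun l : Fin k => g ω l),
             (fun l l' : Fin k => overlap ξ ω.1 l l'))) (P₁.prod P₂)) :
    UnifiedAvg P₁ P₂ w ξ g t (bCoef P₁ w ξ qs p) := by
    classical
  obtain ⟨hw, hξ, -⟩ := hRM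
  obtain ⟨hgm, -⟩ := hg
  obtain ⟨hprmm, -⟩ := hprm
  intro k hk nn f hf hfb
  set b : ℝ := bCoef P₁ w ξ qs p with hb
  set P : Measure (Ω₁ × Ω₂) := P₁.prod P₂ with hP
  -- basic measurability facts
  have hover : ∀ l l' : ℕ, Measurable fun ω₁ : Ω₁ => overlap ξ ω₁ l l' :=
    fun l l' => measurable_overlap hξ l l'
  have htilt : ∀ m : ℕ, Measurable fun ω : Ω₁ × Ω₂ => tilt w g t ω m := by
    intro m
    have hD : Measurable fun ω : Ω₁ × Ω₂ => ∑' m', w ω.1 m' * Real.exp (t * g ω m') :=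
      measurable_tsum_real fun m' =>
        (((hw m').comp measurable_fst).mul (((hgm m').const_mul t).exp))
    exact (((hw m).comp measurable_fst).mul (((hgm m).const_mul t).exp)).div hD
  have htiltp : ∀ l : ℕ, Measurable fun ω => tilt w g t ω (prm ω l) :=
    fun l => measurable_comp_countable htilt (hprmm l)
  have hgp : ∀ l : ℕ, Measurable fun ω => g ω (prm ω l) :=
    fun l => measurable_comp_countable hgm (hprmm l)
  have hoverp : ∀ l l' : ℕ, Measurable fun ω => overlap ξ ω.1 (prm ω l) (prm ω l') := by
    intro l l'
    refine measurable_comp_countable (F := fun (ω : Ω₁ × Ω₂) (q : ℕ × ℕ) => overlap ξ ω.1 q.1 q.2)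
      (fun q => ?_) ((hprmm l).prodMk (hprmm l'))
    exact (hover q.1 q.2).comp measurable_fst
  -- the full-sequence maps
  set Φ : (Ω₁ × Ω₂) → (ℕ ⊕ ℕ ⊕ ℕ × ℕ) → ℝ := fun ω =>
    Sum.elim (fun l => tilt w g t ω (prm ω l))
      (Sum.elim (fun l => g ω (prm ω l) - b * t)
        (fun q => overlap ξ ω.1 (prm ω q.1) (prm ω q.2))) with hΦdef
  set Ψ : (Ω₁ × Ω₂) → (ℕ ⊕ ℕ ⊕ ℕ × ℕ) → ℝ := fun ω =>
    Sum.elim (fun l => w ω.1 l)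
      (Sum.elim (fun l => g ω l) (fun q => overlap ξ ω.1 q.1 q.2)) with hΨdef
  have hΦm : Measurable Φ := by
    refine measurable_pi_lambda _ fun i => ?_
    rcases i with n | n | q
    · exact htiltp n
    · exact (hgp n).sub measurable_const
    · exact hoverp q.1 q.2
  have hΨm : Measurable Ψ := by
    refine measurable_pi_lambda _ fun i => ?_
    rcases i with n | n | q
    · exact (hw n).comp measurable_fst
    · exact hgm n
    · exact (hover q.1 q.2).comp measurable_fst
  -- the test function
  set F : ((ℕ ⊕ ℕ ⊕ ℕ × ℕ) → ℝ) → ℝ := fun x => ∑' j : Fin k → ℕ,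
    (∏ i, x (Sum.inl (j i))) * (∏ i, x (Sum.inr (Sum.inl (j i))) ^ nn i) *
      f (fun i i' => x (Sum.inr (Sum.inr (j i, j i')))) with hFdef
  have hFm : Measurable F := by
    refine measurable_tsum_real fun j => ?_
    refine Measurable.mul (Measurable.mul ?_ ?_) ?_
    · exact Finset.measurable_prod _ fun i _ => measurable_pi_apply _
    · exact Finset.measurable_prod _ fun i _ => (measurable_pi_apply _).pow_const _
    · exact hf.comp (measurable_pi_lambda _ fun i =>
        measurable_pi_lambda _ fun i' => measurable_pi_apply _)
  -- equality of the pushforward measures, via the cylinder π-system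
  have hmap : P.map Φ = P.map Ψ := by
    haveI : IsProbabilityMeasure (P.map Φ) := Measure.isProbabilityMeasure_map hΦm.aemeasurable
    haveI : IsProbabilityMeasure (P.map Ψ) := Measure.isProbabilityMeasure_map hΨm.aemeasurable
    refine ext_of_generate_finite _ generateFrom_measurableCylinders.symm
      isPiSystem_measurableCylinders (fun s hs => ?_) (by simp)
    obtain ⟨S, T, hT, rfl⟩ := (mem_measurableCylinders s).mp hs
    set rank : (ℕ ⊕ ℕ ⊕ ℕ × ℕ) → ℕ := Sum.elim id (Sum.elim id fun q => max q.1 q.2)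
      with hrank
    set K : ℕ := S.sup rank + 1 with hKdef
    have hK1 : 1 ≤ K := Nat.succ_le_succ (Nat.zero_le _)
    have hKmem : ∀ i ∈ S, rank i < K := fun i hi => Nat.lt_succ_of_le (Finset.le_sup hi)
    set Θ : (Ω₁ × Ω₂) → (Fin K → ℝ) × (Fin K → ℝ) × (Fin K → Fin K → ℝ) := fun ω =>
      ((fun l : Fin K => tilt w g t ω (prm ω l)),
       (fun l : Fin K => g ω (prm ω l) - b * t),
       (fun l l' : Fin K => overlap ξ ω.1 (prm ω l) (prm ω l'))) with hΘdef
    set Θ' : (Ω₁ × Ω₂) → (Fin K → ℝ) × (Fin K → ℝ) × (Fin K → Fin K → ℝ) := fun ω =>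
      ((fun l : Fin K => w ω.1 l),
       (fun l : Fin K => g ω l),
       (fun l l' : Fin K => overlap ξ ω.1 l l')) with hΘ'def
    have hΘm : Measurable Θ := by
      refine Measurable.prodMk (measurable_pi_lambda _ fun l => htiltp l)
        (Measurable.prodMk (measurable_pi_lambda _ fun l => (hgp l).sub measurable_const)
          (measurable_pi_lambda _ fun l => measurable_pi_lambda _ fun l' => hoverp l l'))
    have hΘ'm : Measurable Θ' := by
      refine Measurable.prodMk (measurable_pi_lambda _ fun l => (hw l).comp measurable_fst)
        (Measurable.prodMk (measurable_pi_lambda _ fun l => hgm l)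
          (measurable_pi_lambda _ fun l => measurable_pi_lambda _ fun l' =>
            (hover l l').comp measurable_fst))
    set ρ : (Fin K → ℝ) × (Fin K → ℝ) × (Fin K → Fin K → ℝ) →
        (∀ _ : S, ℝ) := fun c i =>
      Sum.elim (fun n => if h : n < K then c.1 ⟨n, h⟩ else 0)
        (Sum.elim (fun n => if h : n < K then c.2.1 ⟨n, h⟩ else 0)
          (fun q => if h : q.1 < K ∧ q.2 < K then c.2.2 ⟨q.1, h.1⟩ ⟨q.2, h.2⟩ else 0)) i.1
      with hρdef
    have hρm : Measurable ρ := by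
      refine measurable_pi_lambda _ fun i => ?_
      obtain ⟨i, hi⟩ := i
      rcases i with n | n | q
      · simp only [hρdef, Sum.elim_inl]
        split_ifs with h
        · exact (measurable_pi_apply _).comp measurable_fst
        · exact measurable_const
      · simp only [hρdef, Sum.elim_inr, Sum.elim_inl]
        split_ifs with h
        · exact (measurable_pi_apply _).comp (measurable_fst.comp measurable_snd)
        · exact measurable_const
      · simp only [hρdef, Sum.elim_inr]
        split_ifs with h
        · exact (measurable_pi_apply _).comp
            ((measurable_pi_apply _).comp (measurable_snd.comp measurable_snd))
        · exact measurable_const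
    have hcΦ : S.restrict ∘ Φ = ρ ∘ Θ := by
      funext ω i
      obtain ⟨i, hi⟩ := i
      rcases i with n | n | q
      · have h : n < K := hKmem _ hi
        simp only [Function.comp_apply, Finset.restrict, hρdef, hΦdef, hΘdef,
          Sum.elim_inl, dif_pos h]
      · have h : n < K := hKmem _ hi
        simp only [Function.comp_apply, Finset.restrict, hρdef, hΦdef, hΘdef,
          Sum.elim_inr, Sum.elim_inl, dif_pos h]
      · have h : q.1 < K ∧ q.2 < K :=
          ⟨lt_of_le_of_lt (le_max_left _ _) (hKmem _ hi),
           lt_of_le_of_lt (le_max_right _ _) (hKmem _ hi)⟩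
        simp only [Function.comp_apply, Finset.restrict, hρdef, hΦdef, hΘdef,
          Sum.elim_inr, dif_pos h]
    have hcΨ : S.restrict ∘ Ψ = ρ ∘ Θ' := by
      funext ω i
      obtain ⟨i, hi⟩ := i
      rcases i with n | n | q
      · have h : n < K := hKmem _ hi
        simp only [Function.comp_apply, Finset.restrict, hρdef, hΨdef, hΘ'def,
          Sum.elim_inl, dif_pos h]
      · have h : n < K := hKmem _ hi
        simp only [Function.comp_apply, Finset.restrict, hρdef, hΨdef, hΘ'def,
          Sum.elim_inr, Sum.elim_inl, dif_pos h]
      · have h : q.1 < K ∧ q.2 < K :=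
          ⟨lt_of_le_of_lt (le_max_left _ _) (hKmem _ hi),
           lt_of_le_of_lt (le_max_right _ _) (hKmem _ hi)⟩
        simp only [Function.comp_apply, Finset.restrict, hρdef, hΨdef, hΘ'def,
          Sum.elim_inr, dif_pos h]
    have hcyl : MeasurableSet (cylinder S T) := MeasurableSet.cylinder (α := fun _ : ℕ ⊕ ℕ ⊕ ℕ × ℕ => ℝ) S hT
    have e1 : Φ ⁻¹' cylinder S T = Θ ⁻¹' (ρ ⁻¹' T) := by
      have : Φ ⁻¹' cylinder S T = (S.restrict ∘ Φ) ⁻¹' T := rfl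
      rw [this, hcΦ]; rfl
    have e2 : Ψ ⁻¹' cylinder S T = Θ' ⁻¹' (ρ ⁻¹' T) := by
      have : Ψ ⁻¹' cylinder S T = (S.restrict ∘ Ψ) ⁻¹' T := rfl
      rw [this, hcΨ]; rfl
    rw [Measure.map_apply hΦm hcyl, Measure.map_apply hΨm hcyl, e1, e2,
      ← Measure.map_apply hΘm (hρm hT), ← Measure.map_apply hΘ'm (hρm hT)]
    rw [hLaw K hK1]
  -- conclude
  have hL : ∀ ω, (∑' j : Fin k → ℕ, (∏ i, tilt w g t ω (j i)) *
      (∏ i, (g ω (j i) - b * t) ^ nn i) *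
      f (fun i i' => overlap ξ ω.1 (j i) (j i'))) = F (Φ ω) := by
    intro ω
    exact (Equiv.tsum_eq (Equiv.piCongrRight fun _ : Fin k => prm ω)
      (fun j : Fin k → ℕ => (∏ i, tilt w g t ω (j i)) *
        (∏ i, (g ω (j i) - b * t) ^ nn i) *
        f (fun i i' => overlap ξ ω.1 (j i) (j i')))).symm
  have hR : ∀ ω, (∑' j : Fin k → ℕ, (∏ i, w ω.1 (j i)) *
      (∏ i, (g ω (j i)) ^ nn i) *
      f (fun i i' => overlap ξ ω.1 (j i) (j i'))) = F (Ψ ω) := fun ω => rfl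
  calc ∫ ω, ∑' j : Fin k → ℕ, (∏ i, tilt w g t ω (j i)) *
        (∏ i, (g ω (j i) - b * t) ^ nn i) *
        f (fun i i' => overlap ξ ω.1 (j i) (j i')) ∂P
      = ∫ ω, F (Φ ω) ∂P := by simp only [hL]
    _ = ∫ x, F x ∂(P.map Φ) := (integral_map hΦm.aemeasurable hFm.aestronglyMeasurable).symm
    _ = ∫ x, F x ∂(P.map Ψ) := by rw [hmap]
    _ = ∫ ω, F (Ψ ω) ∂P := integral_map hΨm.aemeasurable hFm.aestronglyMeasurable
    _ = ∫ ω, ∑' j : Fin k → ℕ, (∏ i, w ω.1 (j i)) *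
        (∏ i, (g ω (j i)) ^ nn i) *
        f (fun i i' => overlap ξ ω.1 (j i) (j i')) ∂P := by simp only [hR]
end
end

section
/- (Lemma 1, weights-and-overlaps case.) Fix an integer p ≥ 1 (with an associated Gaussian field g for p), t ∈ ℝ, and let π be a measurable reordering for (p,t). Suppose that for every k ≥ 1 the joint law of ((w^t_{π(l)})_{l<k}, (Q_{π(l),π(l')})_{l,l'<k}) equals the joint law of ((w_l)_{l<k}, (Q_{l,l'})_{l,l'<k}). Then for every n ≥ 1 and every bounded measurable f : (Fin n → Fin n → ℝ) → ℝ, one has E⟨f⟩_t = E⟨f⟩, i.e., E[Σ_{j : Fin n → ℕ} (Π_i w^t_{j i}) f((Q_{j i, j i'}))] = E[Σ_{j : Fin n → ℕ} (Π_i w_{j i}) f((Q_{j i, j i'}))]. -/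
open MeasureTheory ProbabilityTheory Real

noncomputable section

section AuxLemmasForStatement5

open Filter Topology

private def extV {k : ℕ} (a : Fin k → ℝ) (m : ℕ) : ℝ :=
  if h : m < k then a ⟨m, h⟩ else 0

private def extM {k : ℕ} (b : Fin k → Fin k → ℝ) (m m' : ℕ) : ℝ :=
  if h : m < k then if h' : m' < k then b ⟨m, h⟩ ⟨m', h'⟩ else 0 else 0

private def Hk (n k : ℕ) (f : (Fin n → Fin n → ℝ) → ℝ)
    (x : (Fin k → ℝ) × (Fin k → Fin k → ℝ)) : ℝ :=
  ∑ j ∈ Fintype.piFinset (fun _ : Fin n => Finset.range k),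
    (∏ i, extV x.1 (j i)) * f (fun i i' => extM x.2 (j i) (j i'))

private lemma Hk_comp (n k : ℕ) (f : (Fin n → Fin n → ℝ) → ℝ) (W : ℕ → ℝ) (Q : ℕ → ℕ → ℝ) :
    Hk n k f (fun l : Fin k => W l, fun l l' : Fin k => Q l l')
      = ∑ j ∈ Fintype.piFinset (fun _ : Fin n => Finset.range k),
          (∏ i, W (j i)) * f (fun i i' => Q (j i) (j i')) := by
  refine Finset.sum_congr rfl fun j hj => ?_
  have hj' : ∀ i, j i < k := fun i => Finset.mem_range.mp (Fintype.mem_piFinset.mp hj i)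
  congr 1
  · exact Finset.prod_congr rfl fun i _ => by simp [extV, hj' i]
  · congr 1; funext i i'; simp [extM, hj' i, hj' i']

private lemma extV_meas {k : ℕ} (m : ℕ) : Measurable fun a : Fin k → ℝ => extV a m := by
  by_cases h : m < k
  · have : (fun a : Fin k → ℝ => extV a m) = fun a => a ⟨m, h⟩ := by
      funext a; simp [extV, h]
    rw [this]; exact measurable_pi_apply _
  · have : (fun a : Fin k → ℝ => extV a m) = fun _ => 0 := by
      funext a; simp [extV, h]
    rw [this]; exact measurable_const

private lemma extM_meas {k : ℕ} (m m' : ℕ) :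
    Measurable fun b : Fin k → Fin k → ℝ => extM b m m' := by
  by_cases h : m < k
  · by_cases h' : m' < k
    · have : (fun b : Fin k → Fin k → ℝ => extM b m m') = fun b => b ⟨m, h⟩ ⟨m', h'⟩ := by
        funext b; simp [extM, h, h']
      rw [this]; exact (measurable_pi_apply _).comp (measurable_pi_apply _)
    · have : (fun b : Fin k → Fin k → ℝ => extM b m m') = fun _ => 0 := by
        funext b; simp [extM, h, h']
      rw [this]; exact measurable_const
  · have : (fun b : Fin k → Fin k → ℝ => extM b m m') = fun _ => 0 := by
      funext b; simp [extM, h]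
    rw [this]; exact measurable_const

private lemma Hk_meas (n k : ℕ) {f : (Fin n → Fin n → ℝ) → ℝ} (hf : Measurable f) :
    Measurable (Hk n k f) := by
  apply Finset.measurable_sum
  intro j _
  apply Measurable.mul
  · exact Finset.measurable_prod _ fun i _ => (extV_meas (j i)).comp measurable_fst
  · exact hf.comp (measurable_pi_lambda _ fun i => measurable_pi_lambda _ fun i' =>
      (extM_meas (j i) (j i')).comp measurable_snd)

private lemma abs_trunc_le {n : ℕ} {W : ℕ → ℝ} {Q : ℕ → ℕ → ℝ}
    {f : (Fin n → Fin n → ℝ) → ℝ} {C : ℝ}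
    (hC : ∀ x, |f x| ≤ C) (hW0 : ∀ l, 0 ≤ W l)
    (hW1 : ∀ k, ∑ l ∈ Finset.range k, W l ≤ 1)
    (u : Finset (Fin n → ℕ)) :
    ∑ j ∈ u, |(∏ i, W (j i)) * f (fun i i' => Q (j i) (j i'))| ≤ C := by
  have hC0 : 0 ≤ C := le_trans (abs_nonneg _) (hC fun _ _ => 0)
  set k : ℕ := (u.sup fun j => Finset.univ.sup j) + 1 with hk
  have hsub : u ⊆ Fintype.piFinset fun _ : Fin n => Finset.range k := by
    intro j hj
    rw [Fintype.mem_piFinset]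
    intro i
    rw [Finset.mem_range]
    calc j i ≤ Finset.univ.sup j := Finset.le_sup (Finset.mem_univ i)
      _ ≤ u.sup fun j => Finset.univ.sup j := Finset.le_sup hj
      _ < k := Nat.lt_succ_self _
  calc ∑ j ∈ u, |(∏ i, W (j i)) * f (fun i i' => Q (j i) (j i'))|
      ≤ ∑ j ∈ Fintype.piFinset (fun _ : Fin n => Finset.range k),
          |(∏ i, W (j i)) * f (fun i i' => Q (j i) (j i'))| :=
        Finset.sum_le_sum_of_subset_of_nonneg hsub (fun _ _ _ => abs_nonneg _)
    _ ≤ ∑ j ∈ Fintype.piFinset (fun _ : Fin n => Finset.range k), (∏ i, W (j i)) * C :=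
        Finset.sum_le_sum fun j _ => by
          rw [abs_mul, abs_of_nonneg (Finset.prod_nonneg fun i _ => hW0 _)]
          exact mul_le_mul_of_nonneg_left (hC _) (Finset.prod_nonneg fun i _ => hW0 _)
    _ = (∑ l ∈ Finset.range k, W l) ^ n * C := by
        rw [← Finset.sum_mul, Finset.sum_prod_piFinset]
        congr 1
        rw [Finset.prod_const, Finset.card_univ, Fintype.card_fin]
    _ ≤ 1 * C := mul_le_mul_of_nonneg_right
        (pow_le_one₀ (Finset.sum_nonneg fun _ _ => hW0 _) (hW1 k)) hC0
    _ = C := one_mul C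

private lemma trunc_tendsto {n : ℕ} {W : ℕ → ℝ} {Q : ℕ → ℕ → ℝ}
    {f : (Fin n → Fin n → ℝ) → ℝ} {C : ℝ}
    (hC : ∀ x, |f x| ≤ C) (hW0 : ∀ l, 0 ≤ W l)
    (hW1 : ∀ k, ∑ l ∈ Finset.range k, W l ≤ 1) :
    Filter.Tendsto (fun k => ∑ j ∈ Fintype.piFinset (fun _ : Fin n => Finset.range k),
      (∏ i, W (j i)) * f (fun i i' => Q (j i) (j i'))) Filter.atTop (𝓝 (gibbs W Q n f)) := by
  set F : (Fin n → ℕ) → ℝ := fun j => (∏ i, W (j i)) * f (fun i i' => Q (j i) (j i')) with hF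
  have habs : Summable fun j => |F j| :=
    summable_of_sum_le (fun j => abs_nonneg _) (abs_trunc_le hC hW0 hW1)
  have hsum : Summable F := habs.of_abs
  have h1 : Filter.Tendsto (fun k => Fintype.piFinset fun _ : Fin n => Finset.range k)
      Filter.atTop Filter.atTop := by
    apply tendsto_atTop_finset_of_monotone
    · intro a b hab
      exact Fintype.piFinset_subset _ _ fun i => Finset.range_subset_range.mpr hab
    · intro j
      exact ⟨(Finset.univ.sup j) + 1, Fintype.mem_piFinset.mpr fun i =>
        Finset.mem_range.mpr (Nat.lt_succ_of_le (Finset.le_sup (Finset.mem_univ i)))⟩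
  exact hsum.hasSum.comp h1

end AuxLemmasForStatement5

open Filter Topology

/-- **Lemma 1, weights-and-overlaps case.** Fix `p ≥ 1` with associated Gaussian
field `g`, `t ∈ ℝ` and a measurable reordering `prm` for `(p, t)`. If for every `k ≥ 1` the
joint law of the reordered tilted weights and overlaps coincides with the joint law of the
original weights and overlaps, then `E⟨f⟩_t = E⟨f⟩` for every `n ≥ 1` and every bounded
measurable function `f` of the overlap array. -/
theorem law_equality_implies_AC_average
    {Ω₁ Ω₂ : Type*} [MeasurableSpace Ω₁] [MeasurableSpace Ω₂]
    (P₁ : Measure Ω₁) (P₂ : Measure Ω₂)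
    [IsProbabilityMeasure P₁] [IsProbabilityMeasure P₂]
    (w : Ω₁ → ℕ → ℝ) (ξ : Ω₁ → ℕ → ℓ2)
    (hRM : IsRandomMeasure P₁ w ξ)
    (p : ℕ) (hp : 1 ≤ p) (g : Ω₁ × Ω₂ → ℕ → ℝ)
    (hg : IsGaussianField P₁ P₂ ξ p g)
    (t : ℝ) (prm : Ω₁ × Ω₂ → Equiv.Perm ℕ)
    (hprm : IsReordering P₁ P₂ w g t prm)
    (hLaw : ∀ k : ℕ, 1 ≤ k →
      Measure.map (fun ω =>
          ((fun l : Fin k => tilt w g t ω (prm ω l)),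
           (fun l l' : Fin k => overlap ξ ω.1 (prm ω l) (prm ω l')))) (P₁.prod P₂)
        = Measure.map (fun ω =>
            ((fun l : Fin k => w ω.1 l),
             (fun l l' : Fin k => overlap ξ ω.1 l l'))) (P₁.prod P₂)) :
    ∀ n : ℕ, 1 ≤ n → ∀ f : (Fin n → Fin n → ℝ) → ℝ, Measurable f → Bdd f →
      ∫ ω, gibbs (tilt w g t ω) (overlap ξ ω.1) n f ∂(P₁.prod P₂)
        = EGibbs P₁ w ξ n f := by

  intro n hn f hfm hfb
  classical
  obtain ⟨C, hC⟩ := hfb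
  obtain ⟨hwm, hξm, hae₁⟩ := hRM
  set μ := P₁.prod P₂ with hμdef
  haveI : Fact ((1 : ENNReal) ≤ 2) := ⟨one_le_two⟩
  -- measurability of the coordinates of ℓ2
  have hcoord : ∀ i : ℕ, Measurable fun x : ℓ2 => (x : ℕ → ℝ) i := fun i =>
    ((continuous_apply i).comp (lp.uniformContinuous_coe (p := 2)).continuous).measurable
  -- measurability of the overlaps
  have hOv : ∀ l l' : ℕ, Measurable fun ω₁ => overlap ξ ω₁ l l' := by
    intro l l'
    apply measurable_of_tendsto_metrizable
      (f := fun k ω₁ => ∑ i ∈ Finset.range k,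
        (ξ ω₁ l : ℕ → ℝ) i * (ξ ω₁ l' : ℕ → ℝ) i)
    · intro k
      exact Finset.measurable_sum _ fun i _ =>
        ((hcoord i).comp (hξm l)).mul ((hcoord i).comp (hξm l'))
    · rw [tendsto_pi_nhds]
      intro ω₁
      have hs := (lp.hasSum_inner (𝕜 := ℝ) (ξ ω₁ l) (ξ ω₁ l')).tendsto_sum_nat
      have he : ∀ i : ℕ, (inner ℝ ((ξ ω₁ l : ℕ → ℝ) i) ((ξ ω₁ l' : ℕ → ℝ) i) : ℝ)
          = (ξ ω₁ l : ℕ → ℝ) i * (ξ ω₁ l' : ℕ → ℝ) i := fun i => by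
        simp [RCLike.inner_apply, starRingEnd_apply, star_trivial, mul_comm]
      refine Filter.Tendsto.congr (fun k => ?_) hs
      exact Finset.sum_congr rfl fun i _ => he i
  have hΦ₀meas : ∀ k : ℕ, Measurable fun ω₁ : Ω₁ =>
      ((fun l : Fin k => w ω₁ l), (fun l l' : Fin k => overlap ξ ω₁ l l')) := by
    intro k
    refine Measurable.prodMk ?_ ?_
    · exact measurable_pi_lambda _ fun l => hwm l
    · exact measurable_pi_lambda _ fun l => measurable_pi_lambda _ fun l' => hOv l l'
  have hΦmeas : ∀ k : ℕ, Measurable fun ω : Ω₁ × Ω₂ =>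
      ((fun l : Fin k => w ω.1 l), (fun l l' : Fin k => overlap ξ ω.1 l l')) :=
    fun k => (hΦ₀meas k).comp measurable_fst
  -- a.e. measurability of the reordered tilted data, from the law equality
  have hΦ'ae : ∀ k : ℕ, 1 ≤ k → AEMeasurable (fun ω =>
      ((fun l : Fin k => tilt w g t ω (prm ω l)),
       (fun l l' : Fin k => overlap ξ ω.1 (prm ω l) (prm ω l')))) μ := by
    intro k hk
    by_contra h
    have h0 := Measure.map_of_not_aemeasurable h
    rw [hLaw k hk] at h0
    haveI := Measure.isProbabilityMeasure_map (μ := μ) (hΦmeas k).aemeasurable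
    exact IsProbabilityMeasure.ne_zero _ h0
  have hae_fst : ∀ {q : Ω₁ → Prop}, (∀ᵐ ω₁ ∂P₁, q ω₁) → ∀ᵐ ω ∂μ, q ω.1 := by
    intro q h
    have hmf : Measure.map Prod.fst μ = P₁ := by
      rw [hμdef, Measure.map_fst_prod, measure_univ, one_smul]
    exact ae_of_ae_map measurable_fst.aemeasurable (hmf ▸ h)
  -- a.e. properties of the reordered tilted weights
  have hW'props : ∀ᵐ ω ∂μ, ∀ k : ℕ, 1 ≤ k →
      (∀ l : Fin k, 0 ≤ tilt w g t ω (prm ω l)) ∧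
        ∑ l : Fin k, tilt w g t ω (prm ω l) ≤ 1 := by
    rw [ae_all_iff]
    intro k
    by_cases hk : 1 ≤ k
    · set S : Set ((Fin k → ℝ) × (Fin k → Fin k → ℝ)) :=
        {x | (∀ l, 0 ≤ x.1 l) ∧ ∑ l, x.1 l ≤ 1} with hS
      have hSm : MeasurableSet S := by
        have : S = (⋂ l, {x : (Fin k → ℝ) × (Fin k → Fin k → ℝ) | 0 ≤ x.1 l}) ∩
            {x | ∑ l, x.1 l ≤ 1} := by
          ext x; simp [hS, Set.mem_iInter]
        rw [this]
        exact (MeasurableSet.iInter fun l =>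
            ((measurable_pi_apply l).comp
              (measurable_fst : Measurable fun x : (Fin k → ℝ) × (Fin k → Fin k → ℝ) => x.1))
              (measurableSet_Ici (a := (0 : ℝ)))).inter
          ((Finset.measurable_sum Finset.univ fun l _ =>
            (measurable_pi_apply l).comp
              (measurable_fst : Measurable fun x : (Fin k → ℝ) × (Fin k → Fin k → ℝ) => x.1))
            (measurableSet_Iic (a := (1 : ℝ))))
      have h1 : ∀ᵐ ω ∂μ, (fun ω : Ω₁ × Ω₂ => ((fun l : Fin k => w ω.1 l),
          (fun l l' : Fin k => overlap ξ ω.1 l l'))) ω ∈ S := by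
        apply hae_fst (q := fun ω₁ => ((fun l : Fin k => w ω₁ l),
          (fun l l' : Fin k => overlap ξ ω₁ l l')) ∈ S)
        filter_upwards [hae₁] with ω₁ h
        refine ⟨fun l => h.1 l, ?_⟩
        rw [Fin.sum_univ_eq_sum_range (fun l => w ω₁ l) k]
        exact sum_le_hasSum (Finset.range k) (fun i _ => h.1 i) h.2.2.1
      have h2 : Measure.map (fun ω : Ω₁ × Ω₂ => ((fun l : Fin k => w ω.1 l),
          (fun l l' : Fin k => overlap ξ ω.1 l l'))) μ Sᶜ = 0 := by
        rw [Measure.map_apply_of_aemeasurable (hΦmeas k).aemeasurable hSm.compl]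
        have := ae_iff.mp h1
        convert this using 2
        rfl
      have h3 : Measure.map (fun ω =>
          ((fun l : Fin k => tilt w g t ω (prm ω l)),
           (fun l l' : Fin k => overlap ξ ω.1 (prm ω l) (prm ω l')))) μ Sᶜ = 0 := by
        rw [hLaw k hk]; exact h2
      have h4 : ∀ᵐ ω ∂μ, ((fun l : Fin k => tilt w g t ω (prm ω l)),
          (fun l l' : Fin k => overlap ξ ω.1 (prm ω l) (prm ω l'))) ∈ S := by
        rw [Measure.map_apply_of_aemeasurable (hΦ'ae k hk) hSm.compl] at h3
        rw [ae_iff]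
        convert h3 using 2
        rfl
      filter_upwards [h4] with ω h
      exact fun _ => ⟨h.1, h.2⟩
    · exact Filter.Eventually.of_forall fun ω h => absurd h hk
  have hW'pt : ∀ᵐ ω ∂μ, (∀ m, 0 ≤ tilt w g t ω (prm ω m)) ∧
      ∀ k, ∑ m ∈ Finset.range k, tilt w g t ω (prm ω m) ≤ 1 := by
    filter_upwards [hW'props] with ω h
    constructor
    · intro m
      simpa using (h (m + 1) (Nat.le_add_left 1 m)).1 ⟨m, Nat.lt_succ_self m⟩
    · intro k
      rcases Nat.eq_zero_or_pos k with hk | hk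
      · simp [hk]
      · have h2 := (h k hk).2
        rwa [Fin.sum_univ_eq_sum_range (fun m => tilt w g t ω (prm ω m)) k] at h2
  -- the key identity of truncated integrals
  have hkey : ∀ k : ℕ, 1 ≤ k →
      (∫ ω, Hk n k f ((fun l : Fin k => tilt w g t ω (prm ω l)),
          (fun l l' : Fin k => overlap ξ ω.1 (prm ω l) (prm ω l'))) ∂μ)
        = ∫ ω₁, Hk n k f ((fun l : Fin k => w ω₁ l),
            (fun l l' : Fin k => overlap ξ ω₁ l l')) ∂P₁ := by
    intro k hk
    have hHm := Hk_meas n k hfm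
    have hmf : Measure.map Prod.fst μ = P₁ := by
      rw [hμdef, Measure.map_fst_prod, measure_univ, one_smul]
    calc ∫ ω, Hk n k f ((fun l : Fin k => tilt w g t ω (prm ω l)),
            (fun l l' : Fin k => overlap ξ ω.1 (prm ω l) (prm ω l'))) ∂μ
        = ∫ x, Hk n k f x ∂(Measure.map (fun ω =>
            ((fun l : Fin k => tilt w g t ω (prm ω l)),
             (fun l l' : Fin k => overlap ξ ω.1 (prm ω l) (prm ω l')))) μ) :=
          (integral_map (hΦ'ae k hk) hHm.aestronglyMeasurable).symm
      _ = ∫ x, Hk n k f x ∂(Measure.map (fun ω : Ω₁ × Ω₂ =>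
            ((fun l : Fin k => w ω.1 l), (fun l l' : Fin k => overlap ξ ω.1 l l'))) μ) := by
          rw [hLaw k hk]
      _ = ∫ ω, Hk n k f ((fun l : Fin k => w ω.1 l),
            (fun l l' : Fin k => overlap ξ ω.1 l l')) ∂μ :=
          integral_map (hΦmeas k).aemeasurable hHm.aestronglyMeasurable
      _ = ∫ ω₁, Hk n k f ((fun l : Fin k => w ω₁ l),
            (fun l l' : Fin k => overlap ξ ω₁ l l')) ∂P₁ := by
          rw [← hmf]
          exact (integral_map measurable_fst.aemeasurable
            (hHm.comp (hΦ₀meas k)).aestronglyMeasurable).symm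
  -- dominated convergence on the tilted side
  have hTlim : Filter.Tendsto (fun k : ℕ => ∫ ω, Hk n (k + 1) f
      ((fun l : Fin (k + 1) => tilt w g t ω (prm ω l)),
       (fun l l' : Fin (k + 1) => overlap ξ ω.1 (prm ω l) (prm ω l'))) ∂μ)
      Filter.atTop (𝓝 (∫ ω, gibbs (fun m => tilt w g t ω (prm ω m))
        (fun m m' => overlap ξ ω.1 (prm ω m) (prm ω m')) n f ∂μ)) := by
    apply tendsto_integral_of_dominated_convergence (bound := fun _ => C)
    · exact fun k => ((Hk_meas n (k + 1) hfm).comp_aemeasurable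
        (hΦ'ae (k + 1) (Nat.le_add_left 1 k))).aestronglyMeasurable
    · exact integrable_const C
    · intro k
      filter_upwards [hW'pt] with ω h
      have e := Hk_comp n (k + 1) f (fun m => tilt w g t ω (prm ω m))
        (fun m m' => overlap ξ ω.1 (prm ω m) (prm ω m'))
      rw [Real.norm_eq_abs, e]
      refine le_trans (Finset.abs_sum_le_sum_abs _ _) ?_
      exact abs_trunc_le (W := fun m => tilt w g t ω (prm ω m))
        (Q := fun m m' => overlap ξ ω.1 (prm ω m) (prm ω m')) hC h.1 h.2 _
    · filter_upwards [hW'pt] with ω h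
      have h2 := (trunc_tendsto (Q := fun m m' => overlap ξ ω.1 (prm ω m) (prm ω m'))
        hC h.1 h.2).comp (tendsto_add_atTop_nat 1)
      exact h2.congr fun k => (Hk_comp n (k + 1) f (fun m => tilt w g t ω (prm ω m))
        (fun m m' => overlap ξ ω.1 (prm ω m) (prm ω m'))).symm
  -- dominated convergence on the untilted side
  have hUlim : Filter.Tendsto (fun k : ℕ => ∫ ω₁, Hk n (k + 1) f
      ((fun l : Fin (k + 1) => w ω₁ l),
       (fun l l' : Fin (k + 1) => overlap ξ ω₁ l l')) ∂P₁)
      Filter.atTop (𝓝 (∫ ω₁, gibbs (w ω₁) (overlap ξ ω₁) n f ∂P₁)) := by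
    apply tendsto_integral_of_dominated_convergence (bound := fun _ => C)
    · exact fun k => ((Hk_meas n (k + 1) hfm).comp (hΦ₀meas (k + 1))).aestronglyMeasurable
    · exact integrable_const C
    · intro k
      filter_upwards [hae₁] with ω₁ h
      have e := Hk_comp n (k + 1) f (w ω₁) (overlap ξ ω₁)
      rw [Real.norm_eq_abs, e]
      refine le_trans (Finset.abs_sum_le_sum_abs _ _) ?_
      exact abs_trunc_le (W := w ω₁) (Q := overlap ξ ω₁) hC h.1
        (fun k' => sum_le_hasSum (Finset.range k') (fun i _ => h.1 i) h.2.2.1) _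
    · filter_upwards [hae₁] with ω₁ h
      have h2 := (trunc_tendsto (Q := overlap ξ ω₁) hC h.1
        (fun k' => sum_le_hasSum (Finset.range k') (fun i _ => h.1 i) h.2.2.1)).comp
        (tendsto_add_atTop_nat 1)
      exact h2.congr fun k => (Hk_comp n (k + 1) f (w ω₁) (overlap ξ ω₁)).symm
  have hfinal : (∫ ω, gibbs (fun m => tilt w g t ω (prm ω m))
      (fun m m' => overlap ξ ω.1 (prm ω m) (prm ω m')) n f ∂μ)
      = ∫ ω₁, gibbs (w ω₁) (overlap ξ ω₁) n f ∂P₁ :=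
    tendsto_nhds_unique
      (hTlim.congr fun k => hkey (k + 1) (Nat.le_add_left 1 k)) hUlim
  have hre : ∀ ω : Ω₁ × Ω₂, gibbs (tilt w g t ω) (overlap ξ ω.1) n f
      = gibbs (fun m => tilt w g t ω (prm ω m))
          (fun m m' => overlap ξ ω.1 (prm ω m) (prm ω m')) n f := by
    intro ω
    exact (Equiv.tsum_eq (Equiv.piCongrRight fun _ : Fin n => prm ω)
      (fun j : Fin n → ℕ => (∏ i, tilt w g t ω (j i)) *
        f fun i i' => overlap ξ ω.1 (j i) (j i'))).symm
  calc ∫ ω, gibbs (tilt w g t ω) (overlap ξ ω.1) n f ∂μ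
      = ∫ ω, gibbs (fun m => tilt w g t ω (prm ω m))
          (fun m m' => overlap ξ ω.1 (prm ω m) (prm ω m')) n f ∂μ := by
        simp only [hre]
    _ = ∫ ω₁, gibbs (w ω₁) (overlap ξ ω₁) n f ∂P₁ := hfinal
    _ = EGibbs P₁ w ξ n f := rfl
end
end
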